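/- Let L ≥ 1 be an integer, r > 1 a real number, and ε : {1,…,L+1} → {0,1} any map. Let A(0) be the L×L real symmetric tridiagonal matrix with diagonal entries A_{j,j}(0) = 1 if ε_j ≠ ε_{j+1}, A_{j,j}(0) = 2/r if ε_j = ε_{j+1} = 1, A_{j,j}(0) = 2(r−1)/r if ε_j = ε_{j+1} = 0 (1 ≤ j ≤ L), off-diagonal entries A_{j,j+1}(0) = A_{j+1,j}(0) = −1/r if ε_{j+1} = 1 and = (1−r)/r if ε_{j+1} = 0 (1 ≤ j ≤ L−1), and all other entries 0. Set n₊ = #{1 ≤ j ≤ L+1 : ε_j = 1} and n₋ = #{1 ≤ j ≤ L+1 : ε_j = 0}. Then det A(0) = r^{−L} (r−1)^{n₋−1} ((r−1)n₊ + n₋); in particular det A(0) ≠ 0. (This is the m = 0 case of Lemma 3.12 for the Gram matrix (A_{i,j}(0))_{i,j=1}^L of the free field construction of W_{q,t}(A(M,N)); here (r−1)n₊ + n₋ = D(0,L;Φ).) -/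

import Mathlib

/-- The entry `A_{k,l}(0)` (1-based indices) of the Gram matrix of the free field
construction of `W_{q,t}(A(M,N))`: a symmetric tridiagonal matrix determined by the
Dynkin-diagram data `ε` (with `ε j = true` standing for `ε_j = 1`). -/
noncomputable def A0ent (r : ℝ) (ε : ℕ → Bool) (k l : ℕ) : ℝ :=
  if k = l then
    (if ε k ≠ ε (k + 1) then 1 else if ε (k + 1) then 2 / r else 2 * (r - 1) / r)
  else if l = k + 1 then (if ε l then -1 / r else (1 - r) / r)
  else if k = l + 1 then (if ε k then -1 / r else (1 - r) / r)
  else 0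

/-- The `L × L` matrix `(A_{i,j}(0))_{i,j=1}^L`. -/
noncomputable def matA0 (L : ℕ) (r : ℝ) (ε : ℕ → Bool) : Matrix (Fin L) (Fin L) ℝ :=
  Matrix.of fun k l => A0ent r ε ((k : ℕ) + 1) ((l : ℕ) + 1)

/-- The number `n₊ = #{1 ≤ j ≤ L+1 : ε_j = 1}`. -/
def nPlus (L : ℕ) (ε : ℕ → Bool) : ℕ :=
  ((Finset.Icc 1 (L + 1)).filter fun j => ε j = true).card

/-- The number `n₋ = #{1 ≤ j ≤ L+1 : ε_j = 0}`. -/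
def nMinus (L : ℕ) (ε : ℕ → Bool) : ℕ :=
  ((Finset.Icc 1 (L + 1)).filter fun j => ε j = false).card

namespace St8

noncomputable def u (r : ℝ) (ε : ℕ → Bool) (i : ℕ) : ℝ := if ε i then 1 else r - 1

noncomputable def P (r : ℝ) (ε : ℕ → Bool) (k : ℕ) : ℝ := ∏ i ∈ Finset.Icc 1 k, u r ε i

noncomputable def S (r : ℝ) (ε : ℕ → Bool) (k : ℕ) : ℝ :=
  ∑ j ∈ Finset.Icc 1 k, ∏ i ∈ (Finset.Icc 1 k).erase j, u r ε i

variable {r : ℝ} {ε : ℕ → Bool}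

lemma u_pos (hr : 1 < r) (i : ℕ) : 0 < u r ε i := by
  unfold u; split <;> linarith

lemma P_pos (hr : 1 < r) (k : ℕ) : 0 < P r ε k :=
  Finset.prod_pos fun i _ => u_pos hr i

lemma P_succ (k : ℕ) : P r ε (k + 1) = u r ε (k + 1) * P r ε k := by
  unfold P
  rw [← Finset.insert_Icc_right_eq_Icc_add_one (by omega), Finset.prod_insert (by simp)]

lemma S_zero : S r ε 0 = 0 := by simp [S]

lemma S_succ (k : ℕ) : S r ε (k + 1) = u r ε (k + 1) * S r ε k + P r ε k := by
  unfold S P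
  rw [← Finset.insert_Icc_right_eq_Icc_add_one (by omega),
    Finset.sum_insert (by simp), Finset.erase_insert (by simp), add_comm, Finset.mul_sum]
  congr 1
  refine Finset.sum_congr rfl fun j hj => ?_
  have hj' := Finset.mem_Icc.1 hj
  rw [Finset.erase_insert_of_ne (by omega), Finset.prod_insert (by
    simp only [Finset.mem_erase, Finset.mem_Icc]; omega)]

lemma S_one : S r ε 1 = 1 := by
  have := S_succ (r := r) (ε := ε) 0
  simp [S_zero, P] at this
  simpa using this

lemma S_two : S r ε 2 = u r ε 1 + u r ε 2 := by
  have h := S_succ (r := r) (ε := ε) 1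
  rw [S_one, P_succ] at h
  simp [P] at h
  rw [h]; ring

lemma S_pos (hr : 1 < r) (k : ℕ) : 0 < S r ε (k + 1) := by
  induction k with
  | zero => rw [S_one]; norm_num
  | succ n ih =>
    rw [S_succ]
    have := P_pos (ε := ε) hr (n + 1)
    have := u_pos (ε := ε) hr (n + 2)
    nlinarith

lemma S_three_term (k : ℕ) :
    S r ε (k + 2) = (u r ε (k + 1) + u r ε (k + 2)) * S r ε (k + 1)
      - (u r ε (k + 1)) ^ 2 * S r ε k := by
  have h1 := S_succ (r := r) (ε := ε) (k + 1)
  have h2 := S_succ (r := r) (ε := ε) k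
  have h3 := P_succ (r := r) (ε := ε) k
  have hP : P r ε k = S r ε (k + 1) - u r ε (k + 1) * S r ε k := by rw [h2]; ring
  rw [h1, h3, hP]; ring

noncomputable def p (r : ℝ) (ε : ℕ → Bool) (j : ℕ) : ℝ := S r ε (j + 1) / (r * S r ε j)


lemma p_pos (hr : 1 < r) (j : ℕ) : 0 < p r ε (j + 1) := by
  unfold p
  exact div_pos (S_pos hr _) (mul_pos (by linarith) (S_pos hr _))

lemma pivot_base (hr : 1 < r) : p r ε 1 = (u r ε 1 + u r ε 2) / r := by
  unfold p
  rw [S_one, S_two, mul_one]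

lemma pivot_id (hr : 1 < r) (n : ℕ) :
    (u r ε (n + 2) + u r ε (n + 3)) / r
      = (-(u r ε (n + 2)) / r) * ((-(u r ε (n + 2)) / r) / p r ε (n + 1))
        + p r ε (n + 2) := by
  have h0 : (0:ℝ) < r := by linarith
  have h1 := (S_pos (r := r) (ε := ε) hr n).ne'
  have h2 := (S_pos (r := r) (ε := ε) hr (n + 1)).ne'
  have h3 := S_three_term (r := r) (ε := ε) (n + 1)
  unfold p
  field_simp
  simp only [show n+1+1 = n+2 from rfl, show n+2+1 = n+3 from rfl, show n+1+2 = n+3 from rfl] at h3 ⊢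
  linear_combination (-1) * h3

lemma A0_diag (hr : r ≠ 0) (j : ℕ) :
    A0ent r ε j j = (u r ε j + u r ε (j + 1)) / r := by
  cases h1 : ε j <;> cases h2 : ε (j + 1) <;>
    simp [A0ent, u, h1, h2] <;> field_simp <;> ring

lemma A0_super (j : ℕ) : A0ent r ε j (j + 1) = -(u r ε (j + 1)) / r := by
  cases h : ε (j + 1) <;> simp [A0ent, u, h] <;> ring

lemma A0_sub (j : ℕ) : A0ent r ε (j + 1) j = -(u r ε (j + 1)) / r := by
  unfold A0ent u
  rw [if_neg (by omega), if_neg (by omega), if_pos rfl]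
  cases h : ε (j + 1) <;> simp [h] <;> ring

lemma A0_far {k l : ℕ} (h : k + 1 < l ∨ l + 1 < k) : A0ent r ε k l = 0 := by
  unfold A0ent
  rw [if_neg (by omega), if_neg (by omega), if_neg (by omega)]

noncomputable def Lm (L : ℕ) (r : ℝ) (ε : ℕ → Bool) : Matrix (Fin L) (Fin L) ℝ :=
  Matrix.of fun k l =>
    if (k : ℕ) = l then p r ε ((k : ℕ) + 1)
    else if (k : ℕ) = (l : ℕ) + 1 then -(u r ε ((l : ℕ) + 2)) / r
    else 0

noncomputable def Um (L : ℕ) (r : ℝ) (ε : ℕ → Bool) : Matrix (Fin L) (Fin L) ℝ :=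
  Matrix.of fun k l =>
    if (k : ℕ) = l then 1
    else if (l : ℕ) = (k : ℕ) + 1 then (-(u r ε ((k : ℕ) + 2)) / r) / p r ε ((k : ℕ) + 1)
    else 0

variable {r : ℝ} {ε : ℕ → Bool}

lemma factor (L : ℕ) (hr : 1 < r) : matA0 L r ε = Lm L r ε * Um L r ε := by
  have hr0 : r ≠ 0 := by positivity
  ext k l
  rw [Matrix.mul_apply]
  show A0ent r ε ((k : ℕ) + 1) ((l : ℕ) + 1) = _
  have hLkk : Lm L r ε k k = p r ε ((k : ℕ) + 1) := by
    simp [Lm]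
  have hUkk : Um L r ε k k = 1 := by
    simp [Um]
  rcases hk : (k : ℕ) with _ | kv
  · -- first row: only m = k contributes
    rw [Finset.sum_eq_single k (fun m _ hm => by
      have : (k : ℕ) ≠ (m : ℕ) := fun h => hm (Fin.ext h.symm)
      simp only [Lm, Matrix.of_apply]
      rw [if_neg (by omega), if_neg (by omega), zero_mul])
      (fun h => absurd (Finset.mem_univ k) h)]
    rcases Nat.lt_trichotomy (l : ℕ) 1 with hl | hl | hl
    · -- l = 0 : diagonal entry
      have hl0 : (l : ℕ) = 0 := by omega
      have hkl : k = l := Fin.ext (by omega)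
      rw [← hkl, hUkk, mul_one, hLkk, hk]
      show A0ent r ε 1 1 = p r ε 1
      rw [A0_diag hr0, pivot_base hr]
    · -- l = 1 : superdiagonal
      have hU : Um L r ε k l = (-(u r ε ((k : ℕ) + 2)) / r) / p r ε ((k : ℕ) + 1) := by
        simp only [Um, Matrix.of_apply]
        rw [if_neg (by omega), if_pos (by omega)]
      rw [hU, hLkk, hk, hl]
      show A0ent r ε 1 (1 + 1) = _
      rw [A0_super]
      have hp := (p_pos (r := r) (ε := ε) hr 0).ne'
      show _ = p r ε 1 * (-u r ε (0 + 2) / r / p r ε 1)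
      rw [mul_div_assoc', mul_comm, mul_div_assoc, div_self hp, mul_one]
    · -- far
      have hU : Um L r ε k l = 0 := by
        simp only [Um, Matrix.of_apply]
        rw [if_neg (by omega), if_neg (by omega)]
      rw [hU, mul_zero, A0_far (by omega)]
  · -- row kv + 1
    have hkvL : kv < L := by omega
    set km : Fin L := ⟨kv, hkvL⟩ with hkm
    have hkmk : km ≠ k := by
      intro h
      have : (km : ℕ) = (k : ℕ) := by rw [h]
      simp [hkm, hk] at this
    have hsum : ∑ m, Lm L r ε k m * Um L r ε m l
        = ∑ m ∈ ({km, k} : Finset (Fin L)), Lm L r ε k m * Um L r ε m l := by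
      refine (Finset.sum_subset (Finset.subset_univ _) fun m _ hm => ?_).symm
      simp only [Finset.mem_insert, Finset.mem_singleton, not_or] at hm
      have h1 : (m : ℕ) ≠ kv := fun h => hm.1 (Fin.ext (by simp [hkm, h]))
      have h2 : (m : ℕ) ≠ (k : ℕ) := fun h => hm.2 (Fin.ext h)
      simp only [Lm, Matrix.of_apply]
      rw [if_neg (by omega), if_neg (by omega), zero_mul]
    rw [hsum, Finset.sum_pair hkmk]
    have hLkm : Lm L r ε k km = -(u r ε (kv + 2)) / r := by
      simp only [Lm, Matrix.of_apply, hkm]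
      rw [if_neg (by omega), if_pos (by simp [hk])]
    rcases Nat.lt_trichotomy (l : ℕ) kv with hl | hl | hl
    · -- far below diagonal
      have hU1 : Um L r ε km l = 0 := by
        simp only [Um, Matrix.of_apply, hkm]
        rw [if_neg (by omega), if_neg (by omega)]
      have hU2 : Um L r ε k l = 0 := by
        simp only [Um, Matrix.of_apply]
        rw [if_neg (by omega), if_neg (by omega)]
      rw [hU1, hU2, mul_zero, mul_zero, add_zero, A0_far (by omega)]
    · -- l = kv : subdiagonal entry
      have hU1 : Um L r ε km l = 1 := by
        simp only [Um, Matrix.of_apply, hkm]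
        rw [if_pos (by omega)]
      have hU2 : Um L r ε k l = 0 := by
        simp only [Um, Matrix.of_apply]
        rw [if_neg (by omega), if_neg (by omega)]
      rw [hU1, hU2, mul_zero, add_zero, hLkm, mul_one, hl]
      show A0ent r ε ((kv + 1) + 1) (kv + 1) = _
      rw [A0_sub]
    rcases Nat.lt_trichotomy (l : ℕ) (kv + 1) with hl2 | hl2 | hl2
    · omega
    · -- l = kv + 1 : diagonal entry
      have hU1 : Um L r ε km l = (-(u r ε (kv + 2)) / r) / p r ε (kv + 1) := by
        simp only [Um, Matrix.of_apply, hkm]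
        rw [if_neg (by omega), if_pos (by omega)]
      have hkl : l = k := Fin.ext (by omega)
      rw [hU1, hkl, hUkk, mul_one, hLkm, hLkk, hk]
      show A0ent r ε (kv + 2) (kv + 2) = _
      rw [A0_diag hr0]
      show (u r ε (kv + 2) + u r ε (kv + 3)) / r = _
      exact pivot_id hr kv
    rcases Nat.lt_trichotomy (l : ℕ) (kv + 2) with hl3 | hl3 | hl3
    · omega
    · -- l = kv + 2 : superdiagonal entry
      have hU1 : Um L r ε km l = 0 := by
        simp only [Um, Matrix.of_apply, hkm]
        rw [if_neg (by omega), if_neg (by omega)]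
      have hU2 : Um L r ε k l = (-(u r ε ((k : ℕ) + 2)) / r) / p r ε ((k : ℕ) + 1) := by
        simp only [Um, Matrix.of_apply]
        rw [if_neg (by omega), if_pos (by omega)]
      rw [hU1, hU2, hLkk, mul_zero, zero_add, hk, hl3]
      show A0ent r ε ((kv + 2)) ((kv + 2) + 1) = _
      rw [A0_super]
      have hp := (p_pos (r := r) (ε := ε) hr (kv + 1)).ne'
      show _ = p r ε (kv + 2) * (-u r ε (kv + 1 + 2) / r / p r ε (kv + 1 + 1))
      rw [show kv + 1 + 2 = kv + 3 from rfl, show kv + 1 + 1 = kv + 2 from rfl,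
        mul_div_assoc', mul_comm, mul_div_assoc, div_self hp, mul_one]
    · -- far above
      have hU1 : Um L r ε km l = 0 := by
        simp only [Um, Matrix.of_apply, hkm]
        rw [if_neg (by omega), if_neg (by omega)]
      have hU2 : Um L r ε k l = 0 := by
        simp only [Um, Matrix.of_apply]
        rw [if_neg (by omega), if_neg (by omega)]
      rw [hU1, hU2, mul_zero, mul_zero, add_zero, A0_far (by omega)]

lemma det_Um (L : ℕ) : (Um L r ε).det = 1 := by
  rw [Matrix.det_of_upperTriangular]
  · simp [Um]
  · intro i j hij
    have hij' : (j : ℕ) < (i : ℕ) := hij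
    simp only [Um, Matrix.of_apply]
    rw [if_neg (by omega), if_neg (by omega)]

lemma det_Lm (L : ℕ) : (Lm L r ε).det = ∏ k : Fin L, p r ε ((k : ℕ) + 1) := by
  rw [Matrix.det_of_lowerTriangular]
  · refine Finset.prod_congr rfl fun k _ => by simp [Lm]
  · intro i j hij
    simp only [Lm, Matrix.of_apply]
    have : (i : ℕ) < (j : ℕ) := hij
    rw [if_neg (by omega), if_neg (by omega)]

lemma prod_pivots (hr : 1 < r) (n : ℕ) :
    ∏ k ∈ Finset.range n, p r ε (k + 1) = S r ε (n + 1) / r ^ n := by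
  have hr0 : (0:ℝ) < r := by linarith
  induction n with
  | zero => simp [S_one]
  | succ n ih =>
    rw [Finset.prod_range_succ, ih]
    unfold p
    have h1 := (S_pos (r := r) (ε := ε) hr n).ne'
    field_simp
    ring
lemma prod_u (s : Finset ℕ) :
    ∏ i ∈ s, u r ε i = (r - 1) ^ (s.filter fun i => ε i = false).card := by
  rw [← Finset.prod_filter_mul_prod_filter_not s (fun i => ε i = false)]
  rw [Finset.prod_congr rfl (fun i hi => show u r ε i = r - 1 by
      have := (Finset.mem_filter.1 hi).2
      simp [u, this]),
    Finset.prod_const,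
    Finset.prod_congr rfl (fun i hi => show u r ε i = 1 by
      have := (Finset.mem_filter.1 hi).2
      simp only [Bool.not_eq_false] at this
      simp [u, this]),
    Finset.prod_const, one_pow, mul_one]

lemma S_count (L : ℕ) :
    S r ε (L + 1) = (nPlus L ε : ℝ) * (r - 1) ^ (nMinus L ε)
      + (nMinus L ε : ℝ) * (r - 1) ^ (nMinus L ε - 1) := by
  unfold S
  have key : ∀ j ∈ Finset.Icc 1 (L + 1),
      ∏ i ∈ (Finset.Icc 1 (L + 1)).erase j, u r ε i
        = if ε j = false then (r - 1) ^ (nMinus L ε - 1) else (r - 1) ^ (nMinus L ε) := by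
    intro j hj
    rw [prod_u, Finset.filter_erase]
    by_cases h : ε j = false
    · rw [if_pos h, Finset.card_erase_of_mem (Finset.mem_filter.2 ⟨hj, h⟩)]
      rfl
    · have hnm : j ∉ Finset.filter (fun i => ε i = false) (Finset.Icc 1 (L + 1)) :=
        fun hm => h (Finset.mem_filter.1 hm).2
      rw [if_neg h, Finset.erase_eq_of_notMem hnm]
      rfl
  rw [Finset.sum_congr rfl key]
  rw [Finset.sum_ite, Finset.sum_const, Finset.sum_const]
  have h1 : (Finset.filter (fun j => ε j = false) (Finset.Icc 1 (L+1))).card = nMinus L ε := rfl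
  have h2 : (Finset.filter (fun j => ¬(ε j = false)) (Finset.Icc 1 (L+1))).card = nPlus L ε := by
    unfold nPlus
    congr 1
    apply Finset.filter_congr
    intro x _
    simp
  rw [h1, h2, nsmul_eq_mul, nsmul_eq_mul]
  ring

end St8

/-- The `m = 0` case of Lemma 3.12:
`det A(0) = r^{-L} (r-1)^{n₋-1} ((r-1)n₊ + n₋)`, and in particular `det A(0) ≠ 0`. -/
theorem statement8 (L : ℕ) (hL : 1 ≤ L) (r : ℝ) (hr : 1 < r) (ε : ℕ → Bool) :
    (matA0 L r ε).det =
        r ^ (-(L : ℝ)) * (r - 1) ^ ((nMinus L ε : ℝ) - 1) *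
          ((r - 1) * (nPlus L ε : ℝ) + (nMinus L ε : ℝ)) ∧
      (matA0 L r ε).det ≠ 0 := by
  have hr0 : (0:ℝ) < r := by linarith
  have hr1 : (0:ℝ) < r - 1 := by linarith
  have hdet : (matA0 L r ε).det = St8.S r ε (L + 1) / r ^ L := by
    rw [St8.factor L hr, Matrix.det_mul, St8.det_Lm, St8.det_Um, mul_one,
      Fin.prod_univ_eq_prod_range (fun i => St8.p r ε (i + 1)) L, St8.prod_pivots hr]
  have hS := St8.S_count (r := r) (ε := ε) L
  constructor
  · rw [hdet, hS, Real.rpow_neg (le_of_lt hr0), Real.rpow_natCast,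
      Real.rpow_sub hr1, Real.rpow_one, Real.rpow_natCast]
    rcases Nat.eq_zero_or_pos (nMinus L ε) with h0 | h0
    · rw [h0]
      norm_num
      field_simp
    · obtain ⟨m, hm⟩ : ∃ m, nMinus L ε = m + 1 := ⟨nMinus L ε - 1, by omega⟩
      rw [hm]
      push_cast
      field_simp
      ring
  · rw [hdet]
    exact (div_pos (St8.S_pos hr L) (pow_pos hr0 L)).ne'
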